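/- Let b be a positive integer, λ > 0, let Φ ⊆ ℝ^b be a nonempty closed convex set with B = sup_{α ∈ Φ} ‖α‖₂ < ∞, and let β, β′ ∈ ℝ^b with ‖β′‖₂ ≤ √b. Let α be the minimizer over Φ of (λ/2)·‖·‖₂² − ⟨·, β⟩ and α′ the minimizer over Φ of (λ/2)·‖·‖₂² − ⟨·, β′⟩. Then |⟨α′, β′⟩ − ⟨α, β⟩| ≤ (2b/λ + B·√b)·(‖β′ − β‖₂/√b); in particular, if additionally ‖β′ − β‖₂ ≤ √b·ε for some ε ≥ 0, then |⟨α′, β′⟩ − ⟨α, β⟩| ≤ (2b/λ + B·√b)·ε. -/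

import Mathlib

open scoped RealInnerProductSpace

lemma strong_min_aux {E : Type*} [NormedAddCommGroup E] [InnerProductSpace ℝ E]
    (lam : ℝ) (β x y : E)
    (h : lam / 2 * ‖x‖ ^ 2 - ⟪x, β⟫ ≤
        lam / 2 * ‖(1/2 : ℝ) • x + (1/2 : ℝ) • y‖ ^ 2 - ⟪(1/2 : ℝ) • x + (1/2 : ℝ) • y, β⟫) :
    lam / 2 * ‖x‖ ^ 2 - ⟪x, β⟫ + lam / 4 * ‖y - x‖ ^ 2 ≤ lam / 2 * ‖y‖ ^ 2 - ⟪y, β⟫ := by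
  have e1 : ‖(1/2 : ℝ) • x + (1/2 : ℝ) • y‖ ^ 2
      = ((‖x‖^2 + 2 * ⟪x, y⟫ + ‖y‖^2)) / 4 := by
    rw [← real_inner_self_eq_norm_sq, ← real_inner_self_eq_norm_sq, ← real_inner_self_eq_norm_sq]
    simp [inner_add_left, inner_add_right, inner_smul_left, inner_smul_right,
      real_inner_comm x y, -inner_self_eq_norm_sq_to_K]
    ring
  have e2 : ‖y - x‖ ^ 2 = ‖x‖^2 - 2 * ⟪x, y⟫ + ‖y‖^2 := by
    rw [← real_inner_self_eq_norm_sq, ← real_inner_self_eq_norm_sq, ← real_inner_self_eq_norm_sq]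
    simp [inner_sub_left, inner_sub_right, real_inner_comm x y, -inner_self_eq_norm_sq_to_K]
    ring
  have e3 : ⟪(1/2 : ℝ) • x + (1/2 : ℝ) • y, β⟫ = (⟪x, β⟫ + ⟪y, β⟫) / 2 := by
    simp [inner_add_left, inner_smul_left]
    ring
  rw [e1, e3] at h
  rw [e2]
  linarith

theorem optimal_value_bounded_difference
    (b : ℕ) (hb : 0 < b) (lam : ℝ) (hlam : 0 < lam)
    (Φ : Set (EuclideanSpace ℝ (Fin b))) (hΦne : Φ.Nonempty)
    (hΦclosed : IsClosed Φ) (hΦconv : Convex ℝ Φ)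
    (B : ℝ) (hB : IsLUB ((fun γ => ‖γ‖) '' Φ) B)
    (β β' : EuclideanSpace ℝ (Fin b)) (hβ'norm : ‖β'‖ ≤ Real.sqrt b)
    (α α' : EuclideanSpace ℝ (Fin b)) (hα : α ∈ Φ) (hα' : α' ∈ Φ)
    (hmin : ∀ γ ∈ Φ, lam / 2 * ‖α‖ ^ 2 - ⟪α, β⟫ ≤ lam / 2 * ‖γ‖ ^ 2 - ⟪γ, β⟫)
    (hmin' : ∀ γ ∈ Φ,
      lam / 2 * ‖α'‖ ^ 2 - ⟪α', β'⟫ ≤ lam / 2 * ‖γ‖ ^ 2 - ⟪γ, β'⟫) :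
    |⟪α', β'⟫ - ⟪α, β⟫| ≤
        (2 * b / lam + B * Real.sqrt b) * (‖β' - β‖ / Real.sqrt b) ∧
      ∀ ε : ℝ, 0 ≤ ε → ‖β' - β‖ ≤ Real.sqrt b * ε →
        |⟪α', β'⟫ - ⟪α, β⟫| ≤ (2 * b / lam + B * Real.sqrt b) * ε := by
  set s := Real.sqrt b with hs
  have hspos : 0 < s := Real.sqrt_pos.mpr (by exact_mod_cast hb)
  have hsq : s ^ 2 = (b : ℝ) := Real.sq_sqrt (by positivity)
  -- midpoint is in Φ
  have hmid : (1/2 : ℝ) • α + (1/2 : ℝ) • α' ∈ Φ :=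
    hΦconv hα hα' (by norm_num) (by norm_num) (by norm_num)
  have hmid' : (1/2 : ℝ) • α' + (1/2 : ℝ) • α ∈ Φ :=
    hΦconv hα' hα (by norm_num) (by norm_num) (by norm_num)
  have h1 := strong_min_aux lam β α α' (hmin _ hmid)
  have h2 := strong_min_aux lam β' α' α (hmin' _ hmid')
  have h1' := hmin α' hα'
  have h2' := hmin' α hα
  have hnn : ‖α - α'‖ = ‖α' - α‖ := by rw [norm_sub_rev]
  rw [hnn] at h2
  -- strong convexity consequence
  have hkey : lam / 2 * ‖α' - α‖ ^ 2 ≤ ⟪α' - α, β' - β⟫ := by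
    have e : ⟪α' - α, β' - β⟫ = (⟪α', β'⟫ - ⟪α, β'⟫) - (⟪α', β⟫ - ⟪α, β⟫) := by
      simp [inner_sub_left, inner_sub_right]
    rw [e]; linarith
  have hCS : ⟪α' - α, β' - β⟫ ≤ ‖α' - α‖ * ‖β' - β‖ := real_inner_le_norm _ _
  have hd : ‖α' - α‖ ≤ 2 / lam * ‖β' - β‖ := by
    rcases eq_or_lt_of_le (norm_nonneg (α' - α)) with h0 | h0
    · rw [← h0]; positivity
    · have h5 := hkey.trans hCS
      rw [div_mul_eq_mul_div, le_div_iff₀ hlam]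
      nlinarith [h5, h0]
  -- B bounds
  have hBα : ‖α‖ ≤ B := hB.1 ⟨α, hα, rfl⟩
  have hBnn : 0 ≤ B := le_trans (norm_nonneg α) hBα
  -- decomposition
  have hdec : ⟪α', β'⟫ - ⟪α, β⟫ = ⟪α' - α, β'⟫ + ⟪α, β' - β⟫ := by
    simp [inner_sub_left, inner_sub_right]
  have habs : |⟪α', β'⟫ - ⟪α, β⟫| ≤ ‖α' - α‖ * ‖β'‖ + ‖α‖ * ‖β' - β‖ := by
    rw [hdec]
    calc |⟪α' - α, β'⟫ + ⟪α, β' - β⟫| ≤ |⟪α' - α, β'⟫| + |⟪α, β' - β⟫| := abs_add_le _ _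
      _ ≤ ‖α' - α‖ * ‖β'‖ + ‖α‖ * ‖β' - β‖ :=
        add_le_add (abs_real_inner_le_norm _ _) (abs_real_inner_le_norm _ _)
  have hmain : |⟪α', β'⟫ - ⟪α, β⟫| ≤ (2 * b / lam + B * s) * (‖β' - β‖ / s) := by
    have h3 : ‖α' - α‖ * ‖β'‖ ≤ (2 / lam * ‖β' - β‖) * s :=
      mul_le_mul hd (hβ'norm) (norm_nonneg _) (by positivity)
    have h4 : ‖α‖ * ‖β' - β‖ ≤ B * ‖β' - β‖ :=
      mul_le_mul_of_nonneg_right hBα (norm_nonneg _)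
    have heq : (2 * b / lam + B * s) * (‖β' - β‖ / s)
        = (2 / lam * ‖β' - β‖) * s + B * ‖β' - β‖ := by
      rw [show ((b : ℝ)) = s ^ 2 from hsq.symm]
      field_simp
    rw [heq]
    linarith
  refine ⟨hmain, fun ε hε hle => ?_⟩
  refine hmain.trans ?_
  have hcoef : 0 ≤ 2 * b / lam + B * s := by positivity
  apply mul_le_mul_of_nonneg_left _ hcoef
  rw [div_le_iff₀ hspos]
  linarith [hle, mul_comm s ε]
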